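/- For every x ∈ [0,1] \ {x₀, 1−x₀}, p is differentiable at x with p'(x) = φ₁(x)·p(x)/φ₂(x). Consequently, for every u ∈ C²([0,1]) and λ ∈ ℝ, the equation φ₂(x)u''(x) + φ₁(x)u'(x) = λu(x) holds for all x ∈ [0,1] if and only if the Sturm–Liouville equation −(p(x)u'(x))' = λ·w(x)·u(x) holds for all x ∈ [0,1] \ {x₀, 1−x₀}. -/

import Mathlib

open Real Set Filter Topology MeasureTheory

/-- The degenerate point `x₀ = (2 − √3)ε`. -/
noncomputable def x0 (ε : ℝ) : ℝ := (2 - Real.sqrt 3) * ε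

/-- Leading coefficient `φ₂` of `D_ε` on the interval. -/
noncomputable def phi2 (ε x : ℝ) : ℝ :=
  if x ≤ ε then (1/12) * (1 - 4*(x/ε) + (x/ε)^2)
  else if x ≤ 1 - ε then -(1/6)
  else (1/12) * (1 - 4*((1-x)/ε) + ((1-x)/ε)^2)

/-- First-order coefficient `φ₁` of `D_ε` on the interval. -/
noncomputable def phi1 (ε x : ℝ) : ℝ :=
  if x ≤ ε then -6 * (1 - x/ε) * ((1 + x/ε)^3)⁻¹
  else if x ≤ 1 - ε then 0
  else 6 * (1 - (1-x)/ε) * ((1 + (1-x)/ε)^3)⁻¹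

/-- Integration-factor function `g` on `[0, ε]`. -/
noncomputable def gfun (ε x : ℝ) : ℝ :=
  Real.sign (x - x0 ε) * |x - x0 ε| ^ ((4 + 2*Real.sqrt 3) * ε) *
    |x - 4*ε + x0 ε| ^ ((4 - 2*Real.sqrt 3) * ε) *
    (x + ε) ^ (-(8*ε)) *
    Real.exp (12*ε^3/(ε+x)^2 + 12*ε^2/(ε+x))

/-- Sturm–Liouville principal coefficient `p`. -/
noncomputable def pfun (ε x : ℝ) : ℝ :=
  if x ≤ ε then gfun ε x / (6 * gfun ε ε)
  else if x ≤ 1 - ε then 1/6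
  else gfun ε (1-x) / (6 * gfun ε ε)

/-- Sturm–Liouville weight `w = -p/φ₂`. -/
noncomputable def wfun (ε x : ℝ) : ℝ := -pfun ε x / phi2 ε x

lemma logderiv_mul {f g : ℝ → ℝ} {x a b : ℝ} (hf : HasDerivAt f (f x * a) x)
    (hg : HasDerivAt g (g x * b) x) :
    HasDerivAt (fun y => f y * g y) ((f x * g x) * (a + b)) x := by
  refine (hf.mul hg).congr_deriv (Eq.symm ?_); ring

lemma sqrt3_gt : 1 < Real.sqrt 3 := by
  rw [show (1:ℝ) = Real.sqrt 1 from (Real.sqrt_one).symm]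
  exact Real.sqrt_lt_sqrt (by norm_num) (by norm_num)

lemma sqrt3_lt : Real.sqrt 3 < 2 := by
  rw [show (2:ℝ) = Real.sqrt 4 from by
    rw [show (4:ℝ) = 2^2 by norm_num, Real.sqrt_sq]; norm_num]
  exact Real.sqrt_lt_sqrt (by norm_num) (by norm_num)

lemma Lval (s ε x : ℝ) (hs : s^2 = 3) (hε : ε ≠ 0)
    (h1 : x - (2-s)*ε ≠ 0) (h2 : x - (2+s)*ε ≠ 0) (h3 : x + ε ≠ 0) :
    (4+2*s)*ε/(x-(2-s)*ε) + (4-2*s)*ε/(x-(2+s)*ε) - 8*ε/(x+ε)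
      - 24*ε^3/(ε+x)^3 - 12*ε^2/(ε+x)^2
    = (-6*(1-x/ε) * ((1+x/ε)^3)⁻¹) / ((1/12)*(1-4*(x/ε)+(x/ε)^2)) := by
  have hq : x^2 - 4*ε*x + ε^2 ≠ 0 := by
    have h : x^2 - 4*ε*x + ε^2 = (x - (2-s)*ε) * (x - (2+s)*ε) := by
      linear_combination (ε^2)*hs
    rw [h]; exact mul_ne_zero h1 h2
  have hA : (4+2*s)*ε/(x-(2-s)*ε) + (4-2*s)*ε/(x-(2+s)*ε)
      = (8*ε*x-28*ε^2)/(x^2-4*ε*x+ε^2) := by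
    rw [div_add_div _ _ h1 h2,
      show (4+2*s)*ε*(x-(2+s)*ε) + (x-(2-s)*ε)*((4-2*s)*ε) = 8*ε*x-28*ε^2 from by
        linear_combination (-4*ε^2)*hs,
      show (x-(2-s)*ε)*(x-(2+s)*ε) = x^2-4*ε*x+ε^2 from by
        linear_combination (-ε^2)*hs]
  rw [hA, show (1:ℝ)+x/ε = (ε+x)/ε from by field_simp,
    show (1:ℝ)-x/ε = (ε-x)/ε from by field_simp,
    show (1:ℝ)-4*(x/ε)+(x/ε)^2 = (x^2-4*ε*x+ε^2)/ε^2 from by field_simp; ring]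
  have hx3 : (ε+x) ≠ 0 := by rw [add_comm]; exact h3
  have hq' : x * (x - ε * 4) + ε ^ 2 ≠ 0 := by intro h; apply hq; linear_combination h
  field_simp
  ring

lemma gderiv (ε : ℝ) (hε : 0 < ε) (x : ℝ) (hx0 : -ε < x)
    (hx1 : x < (2+Real.sqrt 3)*ε) (hxne : x ≠ x0 ε) :
    HasDerivAt (gfun ε)
      ((-6*(1-x/ε) * ((1+x/ε)^3)⁻¹) * gfun ε x / ((1/12)*(1-4*(x/ε)+(x/ε)^2))) x := by
  have hs : Real.sqrt 3 ^ 2 = 3 := Real.sq_sqrt (by norm_num)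
  have hs1 := sqrt3_gt
  have hs2 := sqrt3_lt
  rw [x0] at hxne
  have hxε : (0:ℝ) < x + ε := by linarith
  have hεx : (0:ℝ) < ε + x := by linarith
  have h2lt : x < (2+Real.sqrt 3)*ε := hx1
  have h2 : x - (2+Real.sqrt 3)*ε ≠ 0 := by intro h; nlinarith [sub_eq_zero.mp h]
  have h1 : x - (2-Real.sqrt 3)*ε ≠ 0 := sub_ne_zero.mpr hxne
  have hf3 : HasDerivAt (fun y : ℝ => (y + ε) ^ (-(8*ε)))
      ((x + ε) ^ (-(8*ε)) * (-(8*ε)/(x+ε))) x := by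
    have hb : HasDerivAt (fun y : ℝ => y + ε) 1 x := (hasDerivAt_id x).add_const ε
    have h := (Real.hasDerivAt_rpow_const (x := x + ε) (p := -(8*ε))
      (Or.inl hxε.ne')).comp x hb
    refine h.congr_deriv (Eq.symm ?_)
    rw [Real.rpow_sub hxε, Real.rpow_one]
    ring
  have hf4 : HasDerivAt (fun y : ℝ => Real.exp (12*ε^3/(ε+y)^2 + 12*ε^2/(ε+y)))
      (Real.exp (12*ε^3/(ε+x)^2 + 12*ε^2/(ε+x)) *
        (-(24*ε^3/(ε+x)^3) + -(12*ε^2/(ε+x)^2))) x := by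
    have hb : HasDerivAt (fun y : ℝ => ε + y) 1 x := (hasDerivAt_id x).const_add ε
    have hden : HasDerivAt (fun y : ℝ => (ε+y)^2) (2*(ε+x)) x := by
      have := hb.fun_pow 2
      simpa using this
    have t1 : HasDerivAt (fun y : ℝ => 12*ε^3/(ε+y)^2) (-(24*ε^3/(ε+x)^3)) x := by
      have h := (hasDerivAt_const x (12*ε^3)).div hden (by positivity)
      refine h.congr_deriv (Eq.symm ?_)
      field_simp
      ring
    have t2 : HasDerivAt (fun y : ℝ => 12*ε^2/(ε+y)) (-(12*ε^2/(ε+x)^2)) x := by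
      have h := (hasDerivAt_const x (12*ε^2)).div hb hεx.ne'
      refine h.congr_deriv (Eq.symm ?_)
      field_simp
      ring
    exact (t1.add t2).exp
  have main : HasDerivAt (gfun ε)
      (gfun ε x * ((4+2*Real.sqrt 3)*ε/(x-(2-Real.sqrt 3)*ε)
        + (4-2*Real.sqrt 3)*ε/(x-(2+Real.sqrt 3)*ε) - 8*ε/(x+ε)
        - 24*ε^3/(ε+x)^3 - 12*ε^2/(ε+x)^2)) x := by
    rcases lt_or_gt_of_ne hxne with hlt | hgt
    · -- x < x0
      have hpos : (0:ℝ) < (2-Real.sqrt 3)*ε - x := by linarith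
      have hf1 : HasDerivAt (fun y : ℝ => -(((2-Real.sqrt 3)*ε - y) ^ ((4+2*Real.sqrt 3)*ε)))
          (-(((2-Real.sqrt 3)*ε - x) ^ ((4+2*Real.sqrt 3)*ε)) *
            ((4+2*Real.sqrt 3)*ε/(x-(2-Real.sqrt 3)*ε))) x := by
        have hb : HasDerivAt (fun y : ℝ => (2-Real.sqrt 3)*ε - y) (-1) x :=
          (hasDerivAt_id x).const_sub _
        have h := ((Real.hasDerivAt_rpow_const (x := (2-Real.sqrt 3)*ε - x)
          (p := (4+2*Real.sqrt 3)*ε) (Or.inl hpos.ne')).comp x hb).neg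
        refine h.congr_deriv (Eq.symm ?_)
        rw [Real.rpow_sub hpos, Real.rpow_one]
        field_simp
        ring
      have hf2 : HasDerivAt (fun y : ℝ => ((2+Real.sqrt 3)*ε - y) ^ ((4-2*Real.sqrt 3)*ε))
          (((2+Real.sqrt 3)*ε - x) ^ ((4-2*Real.sqrt 3)*ε) *
            ((4-2*Real.sqrt 3)*ε/(x-(2+Real.sqrt 3)*ε))) x := by
        have hb : HasDerivAt (fun y : ℝ => (2+Real.sqrt 3)*ε - y) (-1) x :=
          (hasDerivAt_id x).const_sub _
        have hposb : (0:ℝ) < (2+Real.sqrt 3)*ε - x := by linarith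
        have h := (Real.hasDerivAt_rpow_const (x := (2+Real.sqrt 3)*ε - x)
          (p := (4-2*Real.sqrt 3)*ε) (Or.inl hposb.ne')).comp x hb
        refine h.congr_deriv (Eq.symm ?_)
        rw [Real.rpow_sub hposb, Real.rpow_one]
        field_simp
        ring
      have prod := logderiv_mul (logderiv_mul (logderiv_mul hf1 hf2) hf3) hf4
      have heq : gfun ε =ᶠ[𝓝 x] (fun y =>
          -(((2-Real.sqrt 3)*ε - y) ^ ((4+2*Real.sqrt 3)*ε)) *
          ((2+Real.sqrt 3)*ε - y) ^ ((4-2*Real.sqrt 3)*ε) *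
          (y + ε) ^ (-(8*ε)) *
          Real.exp (12*ε^3/(ε+y)^2 + 12*ε^2/(ε+y))) := by
        filter_upwards [Iio_mem_nhds hlt] with y hy
        have hy2 : y - 4*ε + x0 ε = y - (2+Real.sqrt 3)*ε := by rw [x0]; ring
        rw [gfun, hy2, x0, Real.sign_of_neg (by simp only [mem_Iio] at hy; linarith),
          abs_of_neg (by simp only [mem_Iio] at hy; linarith : y - (2-Real.sqrt 3)*ε < 0),
          abs_of_neg (by simp only [mem_Iio] at hy; nlinarith : y - (2+Real.sqrt 3)*ε < 0),
          neg_sub, neg_sub]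
        ring
      have hgx : gfun ε x = -(((2-Real.sqrt 3)*ε - x) ^ ((4+2*Real.sqrt 3)*ε)) *
          ((2+Real.sqrt 3)*ε - x) ^ ((4-2*Real.sqrt 3)*ε) *
          (x + ε) ^ (-(8*ε)) *
          Real.exp (12*ε^3/(ε+x)^2 + 12*ε^2/(ε+x)) := heq.eq_of_nhds
      have := prod.congr_of_eventuallyEq heq
      refine this.congr_deriv (Eq.symm ?_)
      rw [hgx]; ring
    · -- x0 < x
      have hpos : (0:ℝ) < x - (2-Real.sqrt 3)*ε := by linarith
      have hf1 : HasDerivAt (fun y : ℝ => (y - (2-Real.sqrt 3)*ε) ^ ((4+2*Real.sqrt 3)*ε))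
          ((x - (2-Real.sqrt 3)*ε) ^ ((4+2*Real.sqrt 3)*ε) *
            ((4+2*Real.sqrt 3)*ε/(x-(2-Real.sqrt 3)*ε))) x := by
        have hb : HasDerivAt (fun y : ℝ => y - (2-Real.sqrt 3)*ε) 1 x :=
          (hasDerivAt_id x).sub_const _
        have h := (Real.hasDerivAt_rpow_const (x := x - (2-Real.sqrt 3)*ε)
          (p := (4+2*Real.sqrt 3)*ε) (Or.inl hpos.ne')).comp x hb
        refine h.congr_deriv (Eq.symm ?_)
        rw [Real.rpow_sub hpos, Real.rpow_one]
        ring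
      have hf2 : HasDerivAt (fun y : ℝ => ((2+Real.sqrt 3)*ε - y) ^ ((4-2*Real.sqrt 3)*ε))
          (((2+Real.sqrt 3)*ε - x) ^ ((4-2*Real.sqrt 3)*ε) *
            ((4-2*Real.sqrt 3)*ε/(x-(2+Real.sqrt 3)*ε))) x := by
        have hb : HasDerivAt (fun y : ℝ => (2+Real.sqrt 3)*ε - y) (-1) x :=
          (hasDerivAt_id x).const_sub _
        have hposb : (0:ℝ) < (2+Real.sqrt 3)*ε - x := by linarith
        have h := (Real.hasDerivAt_rpow_const (x := (2+Real.sqrt 3)*ε - x)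
          (p := (4-2*Real.sqrt 3)*ε) (Or.inl hposb.ne')).comp x hb
        refine h.congr_deriv (Eq.symm ?_)
        rw [Real.rpow_sub hposb, Real.rpow_one]
        field_simp
        ring
      have prod := logderiv_mul (logderiv_mul (logderiv_mul hf1 hf2) hf3) hf4
      have heq : gfun ε =ᶠ[𝓝 x] (fun y =>
          (y - (2-Real.sqrt 3)*ε) ^ ((4+2*Real.sqrt 3)*ε) *
          ((2+Real.sqrt 3)*ε - y) ^ ((4-2*Real.sqrt 3)*ε) *
          (y + ε) ^ (-(8*ε)) *
          Real.exp (12*ε^3/(ε+y)^2 + 12*ε^2/(ε+y))) := by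
        have hmem : Ioo ((2-Real.sqrt 3)*ε) ((2+Real.sqrt 3)*ε) ∈ 𝓝 x :=
          Ioo_mem_nhds hgt h2lt
        filter_upwards [hmem] with y hy
        obtain ⟨hya, hyb⟩ := hy
        have hy2 : y - 4*ε + x0 ε = y - (2+Real.sqrt 3)*ε := by rw [x0]; ring
        rw [gfun, hy2, x0, Real.sign_of_pos (by linarith),
          abs_of_pos (by linarith : (0:ℝ) < y - (2-Real.sqrt 3)*ε),
          abs_of_neg (by linarith : y - (2+Real.sqrt 3)*ε < 0),
          neg_sub]
        ring
      have hgx : gfun ε x = (x - (2-Real.sqrt 3)*ε) ^ ((4+2*Real.sqrt 3)*ε) *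
          ((2+Real.sqrt 3)*ε - x) ^ ((4-2*Real.sqrt 3)*ε) *
          (x + ε) ^ (-(8*ε)) *
          Real.exp (12*ε^3/(ε+x)^2 + 12*ε^2/(ε+x)) := heq.eq_of_nhds
      have := prod.congr_of_eventuallyEq heq
      refine this.congr_deriv (Eq.symm ?_)
      rw [hgx]; ring
  have hL := Lval (Real.sqrt 3) ε x hs hε.ne' h1 h2 hxε.ne'
  refine main.congr_deriv (Eq.symm ?_)
  rw [hL]
  ring

lemma gne (ε : ℝ) (hε : 0 < ε) (x : ℝ) (hxa : -ε < x)
    (hxb : x < (2+Real.sqrt 3)*ε) (hxne : x ≠ x0 ε) : gfun ε x ≠ 0 := by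
  have hs1 := sqrt3_gt
  have hx4 : x - 4*ε + x0 ε ≠ 0 := by
    rw [x0]; intro h; nlinarith
  rw [gfun]
  apply mul_ne_zero (mul_ne_zero (mul_ne_zero (mul_ne_zero ?_ ?_) ?_) ?_) ?_
  · simp [Real.sign_eq_zero_iff, sub_eq_zero, hxne]
  · exact (Real.rpow_pos_of_pos (abs_pos.mpr (sub_ne_zero.mpr hxne)) _).ne'
  · exact (Real.rpow_pos_of_pos (abs_pos.mpr hx4) _).ne'
  · exact (Real.rpow_pos_of_pos (by linarith) _).ne'
  · exact (Real.exp_pos _).ne'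

lemma pderiv (ε : ℝ) (hε0 : 0 < ε) (hε1 : ε < 1/2) :
    ∀ x ∈ Icc (0:ℝ) 1 \ {x0 ε, 1 - x0 ε},
      HasDerivAt (pfun ε) (phi1 ε x * pfun ε x / phi2 ε x) x := by
  have hs1 := sqrt3_gt
  have hs2 := sqrt3_lt
  have hx0pos : 0 < x0 ε := by rw [x0]; nlinarith
  have hx0lt : x0 ε < ε := by rw [x0]; nlinarith
  have hεhalf : ε < 1 - ε := by linarith
  have hgε : gfun ε ε ≠ 0 :=
    gne ε hε0 ε (by linarith) (by nlinarith) (ne_of_gt hx0lt)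
  have hpε : gfun ε ε / (6 * gfun ε ε) = 1/6 := by
    rw [div_eq_div_iff (by exact mul_ne_zero (by norm_num) hgε) (by norm_num : (6:ℝ) ≠ 0)]
    ring
  have hpmid : ∀ y ∈ Icc ε (1-ε), pfun ε y = 1/6 := by
    intro y hy
    rcases eq_or_lt_of_le hy.1 with h | h
    · rw [pfun, if_pos (le_of_eq h.symm), ← h]; exact hpε
    · rw [pfun, if_neg (not_le.mpr h), if_pos hy.2]
  rintro x ⟨⟨hxlo, hxhi⟩, hne⟩
  simp only [mem_insert_iff, mem_singleton_iff, not_or] at hne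
  obtain ⟨hne1, hne2⟩ := hne
  rcases lt_trichotomy x ε with hxε | hxε | hxε
  · -- x < ε
    have hd := (gderiv ε hε0 x (by linarith) (by nlinarith) hne1).div_const (6 * gfun ε ε)
    have heq : pfun ε =ᶠ[𝓝 x] (fun y => gfun ε y / (6 * gfun ε ε)) := by
      filter_upwards [Iio_mem_nhds hxε] with y hy
      rw [pfun, if_pos (le_of_lt hy)]
    have hdp := hd.congr_of_eventuallyEq heq
    refine hdp.congr_deriv (Eq.symm ?_)
    rw [phi1, if_pos hxε.le, phi2, if_pos hxε.le, pfun, if_pos hxε.le]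
    ring
  · -- x = ε
    have hval : phi1 ε x * pfun ε x / phi2 ε x = 0 := by
      rw [phi1, if_pos hxε.le, hxε, div_self hε0.ne']
      norm_num
    rw [hval]
    have hg := (gderiv ε hε0 x (by linarith) (by rw [hxε]; nlinarith) hne1).div_const
      (6 * gfun ε ε)
    have hgval : (-6*(1-x/ε) * ((1+x/ε)^3)⁻¹) * gfun ε x / ((1/12)*(1-4*(x/ε)+(x/ε)^2))
        / (6 * gfun ε ε) = 0 := by
      rw [hxε, div_self hε0.ne']
      norm_num
    rw [hgval] at hg
    have hleft : HasDerivWithinAt (pfun ε) 0 (Iic x) x := by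
      refine (hg.hasDerivWithinAt).congr (fun y hy => ?_) ?_
      · rw [pfun, if_pos ((mem_Iic.mp hy).trans hxε.le)]
      · rw [pfun, if_pos hxε.le]
    have hright : HasDerivWithinAt (pfun ε) 0 (Icc x (1-ε)) x := by
      refine (hasDerivWithinAt_const x _ (1/6 : ℝ)).congr
        (fun y hy => hpmid y ⟨by linarith [hy.1], hy.2⟩) (hpmid x ⟨hxε.ge, by linarith⟩)
    refine (hleft.union hright).hasDerivAt ?_
    rw [Iic_union_Icc_eq_Iic (by linarith : x ≤ 1 - ε)]
    exact Iic_mem_nhds (by linarith)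
  · rcases lt_trichotomy x (1-ε) with hx2 | hx2 | hx2
    · -- ε < x < 1-ε
      have hval : phi1 ε x * pfun ε x / phi2 ε x = 0 := by
        rw [phi1, if_neg (not_le.mpr hxε), if_pos hx2.le]
        norm_num
      rw [hval]
      have heq : pfun ε =ᶠ[𝓝 x] (fun _ => (1:ℝ)/6) := by
        filter_upwards [Ioo_mem_nhds hxε hx2] with y hy
        rw [pfun, if_neg (not_le.mpr hy.1), if_pos hy.2.le]
      exact (hasDerivAt_const x ((1:ℝ)/6)).congr_of_eventuallyEq heq
    · -- x = 1 - ε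
      have hval : phi1 ε x * pfun ε x / phi2 ε x = 0 := by
        rw [phi1, if_neg (not_le.mpr hxε), if_pos hx2.le]
        norm_num
      rw [hval]
      have hleft : HasDerivWithinAt (pfun ε) 0 (Icc ε x) x := by
        rw [hx2]
        exact (hasDerivWithinAt_const _ _ (1/6 : ℝ)).congr
          (fun y hy => hpmid y hy) (hpmid (1-ε) ⟨hεhalf.le, le_rfl⟩)
      have c3 : 1 - x ≠ x0 ε := by
        rw [hx2, x0]; intro h; nlinarith [show (1:ℝ)-(1-ε) = ε from by ring]
      have hcomp := ((gderiv ε hε0 (1-x) (by linarith) (by nlinarith) c3).comp x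
        ((hasDerivAt_id x).const_sub 1)).div_const (6 * gfun ε ε)
      have e : 1 - x = ε := by rw [hx2]; ring
      rw [e] at hcomp
      have hzval : (-6*(1-ε/ε) * ((1+ε/ε)^3)⁻¹) * gfun ε ε / ((1/12)*(1-4*(ε/ε)+(ε/ε)^2))
          * (-1) / (6 * gfun ε ε) = 0 := by
        rw [div_self hε0.ne']
        norm_num
      rw [hzval] at hcomp
      have hright : HasDerivWithinAt (pfun ε) 0 (Ici x) x := by
        refine (hcomp.hasDerivWithinAt).congr (fun y hy => ?_) ?_
        · rcases eq_or_lt_of_le (mem_Ici.mp hy) with h | h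
          · rw [← h]
            simp only [Function.comp]
            rw [e, pfun, if_neg (by rw [hx2]; exact not_le.mpr hεhalf), if_pos (le_of_eq hx2)]
            exact hpε.symm ▸ hpε ▸ rfl
          · rw [pfun, if_neg (by linarith), if_neg (not_le.mpr (hx2 ▸ h))]
            rfl
        · simp only [Function.comp]
          rw [e, pfun, if_neg (by rw [hx2]; exact not_le.mpr hεhalf), if_pos (le_of_eq hx2)]
          exact hpε.symm
      refine (hleft.union hright).hasDerivAt ?_
      rw [Icc_union_Ici_eq_Ici (by linarith : ε ≤ x)]
      exact Ici_mem_nhds (by linarith)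
    · -- 1 - ε < x
      have c3 : 1 - x ≠ x0 ε := by
        intro h; exact hne2 (by linarith)
      have hcomp := ((gderiv ε hε0 (1-x) (by linarith) (by nlinarith) c3).comp x
        ((hasDerivAt_id x).const_sub 1)).div_const (6 * gfun ε ε)
      have heq : pfun ε =ᶠ[𝓝 x] (fun y => gfun ε (1-y) / (6 * gfun ε ε)) := by
        filter_upwards [Ioi_mem_nhds hx2] with y hy
        rw [pfun, if_neg (by simp only [mem_Ioi] at hy; linarith),
          if_neg (by simp only [mem_Ioi] at hy; exact not_le.mpr hy)]
      have hdp := hcomp.congr_of_eventuallyEq heq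
      refine hdp.congr_deriv (Eq.symm ?_)
      rw [phi1, if_neg (not_le.mpr hxε), if_neg (by linarith),
        phi2, if_neg (not_le.mpr hxε), if_neg (by linarith),
        pfun, if_neg (not_le.mpr hxε), if_neg (by linarith)]
      ring

lemma phi2_ne (ε : ℝ) (hε0 : 0 < ε) (hε1 : ε < 1/2) (x : ℝ) (hx : x ∈ Icc (0:ℝ) 1)
    (h1 : x ≠ x0 ε) (h2 : x ≠ 1 - x0 ε) : phi2 ε x ≠ 0 := by
  have hs : Real.sqrt 3 ^ 2 = 3 := Real.sq_sqrt (by norm_num)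
  have hs1 := sqrt3_gt
  have hs2 := sqrt3_lt
  obtain ⟨hxlo, hxhi⟩ := hx
  have key : ∀ y : ℝ, 0 ≤ y → y ≤ ε → y ≠ x0 ε →
      (1/12) * (1 - 4*(y/ε) + (y/ε)^2) ≠ 0 := by
    intro y hy0 hyε hyne h
    have hA : 1 - 4*(y/ε) + (y/ε)^2 = 0 := by linarith
    have hq : y^2 - 4*ε*y + ε^2 = 0 := by
      field_simp at hA
      nlinarith [hA]
    have hfac : (y - (2-Real.sqrt 3)*ε) * (y - (2+Real.sqrt 3)*ε) = 0 := by
      linear_combination hq - ε^2*hs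
    rcases mul_eq_zero.mp hfac with h' | h'
    · exact hyne (by rw [x0]; linarith [sub_eq_zero.mp h'])
    · have := sub_eq_zero.mp h'
      nlinarith
  by_cases hxε : x ≤ ε
  · rw [phi2, if_pos hxε]; exact key x hxlo hxε h1
  · by_cases hx2 : x ≤ 1-ε
    · rw [phi2, if_neg hxε, if_pos hx2]; norm_num
    · rw [phi2, if_neg hxε, if_neg hx2]
      exact key (1-x) (by linarith) (by linarith [not_le.mp hx2])
        (fun h => h2 (by linarith [h]))

lemma pfun_ne (ε : ℝ) (hε0 : 0 < ε) (hε1 : ε < 1/2) (x : ℝ) (hx : x ∈ Icc (0:ℝ) 1)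
    (h1 : x ≠ x0 ε) (h2 : x ≠ 1 - x0 ε) : pfun ε x ≠ 0 := by
  have hs1 := sqrt3_gt
  have hs2 := sqrt3_lt
  have hx0lt : x0 ε < ε := by rw [x0]; nlinarith
  have hgε : gfun ε ε ≠ 0 :=
    gne ε hε0 ε (by linarith) (by nlinarith) (ne_of_gt hx0lt)
  obtain ⟨hxlo, hxhi⟩ := hx
  by_cases hxε : x ≤ ε
  · rw [pfun, if_pos hxε]
    exact div_ne_zero (gne ε hε0 x (by linarith) (by nlinarith) h1)
      (mul_ne_zero (by norm_num) hgε)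
  · by_cases hx2 : x ≤ 1-ε
    · rw [pfun, if_neg hxε, if_pos hx2]; norm_num
    · rw [pfun, if_neg hxε, if_neg hx2]
      refine div_ne_zero (gne ε hε0 (1-x) (by linarith) ?_ (fun h => h2 (by linarith [h])))
        (mul_ne_zero (by norm_num) hgε)
      have := not_le.mp hx2
      nlinarith

lemma vanish_at (h : ℝ → ℝ) (l a : ℝ) (hla : l < a)
    (ht : Filter.Tendsto h (𝓝[Ioo l a] a) (𝓝 (h a))) (hz : ∀ y ∈ Ioo l a, h y = 0) :
    h a = 0 := by
  have hne : (𝓝[Ioo l a] a).NeBot := by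
    rw [← mem_closure_iff_nhdsWithin_neBot, closure_Ioo hla.ne]
    exact ⟨hla.le, le_rfl⟩
  refine tendsto_nhds_unique ht ?_
  refine Filter.Tendsto.congr' ?_ tendsto_const_nhds
  filter_upwards [self_mem_nhdsWithin] with y hy
  exact (hz y hy).symm

theorem stmt3 (ε : ℝ) (hε : ε ∈ Ioo (0:ℝ) (1/2)) :
    (∀ x ∈ Icc (0:ℝ) 1 \ {x0 ε, 1 - x0 ε},
        HasDerivAt (pfun ε) (phi1 ε x * pfun ε x / phi2 ε x) x) ∧
    (∀ (u u' u'' : ℝ → ℝ) (lam : ℝ),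
      (∀ x ∈ Icc (0:ℝ) 1, HasDerivAt u (u' x) x) →
      (∀ x ∈ Icc (0:ℝ) 1, HasDerivAt u' (u'' x) x) →
      ContinuousOn u'' (Icc 0 1) →
      ((∀ x ∈ Icc (0:ℝ) 1, phi2 ε x * u'' x + phi1 ε x * u' x = lam * u x) ↔
        (∀ x ∈ Icc (0:ℝ) 1 \ {x0 ε, 1 - x0 ε},
          HasDerivAt (fun y => pfun ε y * u' y) (-(lam * wfun ε x * u x)) x))) := by
  obtain ⟨hε0, hε1⟩ := hε
  have hs1 := sqrt3_gt
  have hs2 := sqrt3_lt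
  have hx0pos : 0 < x0 ε := by rw [x0]; nlinarith
  have hx0lt : x0 ε < ε := by rw [x0]; nlinarith
  have hεhalf : ε < 1 - ε := by linarith
  refine ⟨pderiv ε hε0 hε1, ?_⟩
  intro u u' u'' lam hu hu' hu''c
  constructor
  · intro hODE x hx
    obtain ⟨hxI, hxne⟩ := hx
    simp only [mem_insert_iff, mem_singleton_iff, not_or] at hxne
    have hφ := phi2_ne ε hε0 hε1 x hxI hxne.1 hxne.2
    have hp := pderiv ε hε0 hε1 x ⟨hxI, by
      simp only [mem_insert_iff, mem_singleton_iff, not_or]; exact hxne⟩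
    have hd := hp.mul (hu' x hxI)
    refine hd.congr_deriv (Eq.symm ?_)
    rw [wfun]
    have hODEx := hODE x hxI
    field_simp
    linear_combination (-pfun ε x) * hODEx
  · intro hSL
    have hpt : ∀ x ∈ Icc (0:ℝ) 1 \ {x0 ε, 1 - x0 ε},
        phi2 ε x * u'' x + phi1 ε x * u' x = lam * u x := by
      intro x hx
      obtain ⟨hxI, hxne⟩ := hx
      simp only [mem_insert_iff, mem_singleton_iff, not_or] at hxne
      have hφ := phi2_ne ε hε0 hε1 x hxI hxne.1 hxne.2
      have hpne := pfun_ne ε hε0 hε1 x hxI hxne.1 hxne.2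
      have hmem : x ∈ Icc (0:ℝ) 1 \ {x0 ε, 1 - x0 ε} := ⟨hxI, by
        simp only [mem_insert_iff, mem_singleton_iff, not_or]; exact hxne⟩
      have hd := (pderiv ε hε0 hε1 x hmem).mul (hu' x hxI)
      have huniq := (hSL x hmem).unique hd
      rw [wfun] at huniq
      have key : pfun ε x * (phi2 ε x * u'' x + phi1 ε x * u' x - lam * u x) = 0 := by
        field_simp at huniq
        linear_combination (-pfun ε x) * huniq
      rcases mul_eq_zero.mp key with h | h
      · exact absurd h hpne
      · linarith
    intro x hxI
    by_cases hx1 : x = x0 ε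
    · subst hx1
      have hsub : Ioo (0:ℝ) (x0 ε) ⊆ Icc (0:ℝ) 1 := fun y hy =>
        ⟨hy.1.le, by nlinarith [hy.2, hx0lt, hεhalf]⟩
      have h2c : ContinuousAt (phi2 ε) (x0 ε) := by
        refine ContinuousAt.congr (f := fun y => (1/12) * (1 - 4*(y/ε) + (y/ε)^2)) ?_ ?_
        · fun_prop
        · filter_upwards [Iio_mem_nhds hx0lt] with y hy
          rw [phi2, if_pos (le_of_lt hy)]
      have h1c : ContinuousAt (phi1 ε) (x0 ε) := by
        refine ContinuousAt.congr (f := fun y => -6 * (1 - y/ε) * ((1 + y/ε)^3)⁻¹) ?_ ?_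
        · have hden : ((1 + x0 ε/ε)^3) ≠ 0 := by positivity
          fun_prop (disch := assumption)
        · filter_upwards [Iio_mem_nhds hx0lt] with y hy
          rw [phi1, if_pos (le_of_lt hy)]
      have F := 𝓝[Ioo (0:ℝ) (x0 ε)] (x0 ε)
      have hFle : 𝓝[Ioo (0:ℝ) (x0 ε)] (x0 ε) ≤ 𝓝 (x0 ε) := nhdsWithin_le_nhds
      have hFleI : 𝓝[Ioo (0:ℝ) (x0 ε)] (x0 ε) ≤ 𝓝[Icc (0:ℝ) 1] (x0 ε) :=
        nhdsWithin_mono _ hsub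
      have ht : Filter.Tendsto (fun y => phi2 ε y * u'' y + phi1 ε y * u' y - lam * u y)
          (𝓝[Ioo (0:ℝ) (x0 ε)] (x0 ε))
          (𝓝 (phi2 ε (x0 ε) * u'' (x0 ε) + phi1 ε (x0 ε) * u' (x0 ε) - lam * u (x0 ε))) := by
        have hI : x0 ε ∈ Icc (0:ℝ) 1 := hxI
        exact (((h2c.tendsto.mono_left hFle).mul
            ((hu''c.continuousWithinAt hI).mono_left hFleI)).add
          ((h1c.tendsto.mono_left hFle).mul
            (((hu' (x0 ε) hI).continuousAt.tendsto).mono_left hFle))).sub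
          ((tendsto_const_nhds).mul (((hu (x0 ε) hI).continuousAt.tendsto).mono_left hFle))
      have hz : ∀ y ∈ Ioo (0:ℝ) (x0 ε),
          phi2 ε y * u'' y + phi1 ε y * u' y - lam * u y = 0 := by
        intro y hy
        have := hpt y ⟨hsub hy, by
          simp only [mem_insert_iff, mem_singleton_iff, not_or]
          exact ⟨hy.2.ne, by intro h; nlinarith [hy.2, hx0lt, hεhalf]⟩⟩
        linarith
      have := vanish_at _ 0 (x0 ε) hx0pos ht hz
      linarith
    · by_cases hx2 : x = 1 - x0 ε
      · subst hx2
        have hlo : 1 - ε < 1 - x0 ε := by linarith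
        have hsub : Ioo (1-ε) (1 - x0 ε) ⊆ Icc (0:ℝ) 1 := fun y hy =>
          ⟨by nlinarith [hy.1], by nlinarith [hy.2]⟩
        have h2c : ContinuousAt (phi2 ε) (1 - x0 ε) := by
          refine ContinuousAt.congr
            (f := fun y => (1/12) * (1 - 4*((1-y)/ε) + ((1-y)/ε)^2)) ?_ ?_
          · fun_prop
          · filter_upwards [Ioi_mem_nhds hlo] with y hy
            simp only [mem_Ioi] at hy
            rw [phi2, if_neg (by linarith), if_neg (by linarith)]
        have h1c : ContinuousAt (phi1 ε) (1 - x0 ε) := by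
          refine ContinuousAt.congr
            (f := fun y => 6 * (1 - (1-y)/ε) * ((1 + (1-y)/ε)^3)⁻¹) ?_ ?_
          · have hden : ((1 + (1-(1 - x0 ε))/ε)^3) ≠ 0 := by
              have : (0:ℝ) < 1 + (1-(1 - x0 ε))/ε := by
                have : (0:ℝ) < (1-(1 - x0 ε))/ε := by
                  apply div_pos (by linarith) hε0
                linarith
              positivity
            fun_prop (disch := assumption)
          · filter_upwards [Ioi_mem_nhds hlo] with y hy
            simp only [mem_Ioi] at hy
            rw [phi1, if_neg (by linarith), if_neg (by linarith)]
        have hFle : 𝓝[Ioo (1-ε) (1 - x0 ε)] (1 - x0 ε) ≤ 𝓝 (1 - x0 ε) := nhdsWithin_le_nhds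
        have hFleI : 𝓝[Ioo (1-ε) (1 - x0 ε)] (1 - x0 ε) ≤ 𝓝[Icc (0:ℝ) 1] (1 - x0 ε) :=
          nhdsWithin_mono _ hsub
        have ht : Filter.Tendsto (fun y => phi2 ε y * u'' y + phi1 ε y * u' y - lam * u y)
            (𝓝[Ioo (1-ε) (1 - x0 ε)] (1 - x0 ε))
            (𝓝 (phi2 ε (1 - x0 ε) * u'' (1 - x0 ε) + phi1 ε (1 - x0 ε) * u' (1 - x0 ε)
              - lam * u (1 - x0 ε))) := by
          have hI : 1 - x0 ε ∈ Icc (0:ℝ) 1 := hxI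
          exact (((h2c.tendsto.mono_left hFle).mul
              ((hu''c.continuousWithinAt hI).mono_left hFleI)).add
            ((h1c.tendsto.mono_left hFle).mul
              (((hu' _ hI).continuousAt.tendsto).mono_left hFle))).sub
            ((tendsto_const_nhds).mul (((hu _ hI).continuousAt.tendsto).mono_left hFle))
        have hz : ∀ y ∈ Ioo (1-ε) (1 - x0 ε),
            phi2 ε y * u'' y + phi1 ε y * u' y - lam * u y = 0 := by
          intro y hy
          have := hpt y ⟨hsub hy, by
            simp only [mem_insert_iff, mem_singleton_iff, not_or]
            exact ⟨by intro h; nlinarith [hy.1], hy.2.ne⟩⟩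
          linarith
        have := vanish_at _ (1-ε) (1 - x0 ε) hlo ht hz
        linarith
      · exact hpt x ⟨hxI, by
          simp only [mem_insert_iff, mem_singleton_iff, not_or]; exact ⟨hx1, hx2⟩⟩
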